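/- On the doubled Sierpinski gasket graph SG, the ball of radius 2^k around the origin satisfies |B_∘(2^k)| = 3^{k+1} + 2 for every integer k ≥ 0. -/

import Mathlib

open Filter MeasureTheory Topology
open scoped ENNReal

noncomputable section

attribute [local instance] Classical.propDecidable

namespace SGidla

/-- The Hausdorff dimension `α = log 3 / log 2` of the Sierpinski gasket. -/
def alpha : ℝ := Real.log 3 / Real.log 2

/-- The walk dimension `β = log 5 / log 2` of the Sierpinski gasket. -/
def beta : ℝ := Real.log 5 / Real.log 2

/-- Vertex sets `V_n` of the finite Sierpinski gasket approximations. -/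
def gasketV : ℕ → Set (ℝ × ℝ)
  | 0 => {((0:ℝ), (0:ℝ)), ((1:ℝ), (0:ℝ)), ((1/2 : ℝ), Real.sqrt 3 / 2)}
  | n+1 => gasketV n ∪ ((fun p => (((2:ℝ)^n, (0:ℝ)) + p)) '' gasketV n) ∪
      ((fun p => (((2:ℝ)^n/2, (2:ℝ)^n/2 * Real.sqrt 3) + p)) '' gasketV n)

/-- Edge sets `E_n` of the finite Sierpinski gasket approximations. -/
def gasketE : ℕ → Set ((ℝ × ℝ) × (ℝ × ℝ))
  | 0 => { (((0:ℝ),(0:ℝ)), ((1:ℝ),(0:ℝ))),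
           (((1:ℝ),(0:ℝ)), ((1/2:ℝ), Real.sqrt 3 / 2)),
           (((0:ℝ),(0:ℝ)), ((1/2:ℝ), Real.sqrt 3 / 2)) }
  | n+1 => gasketE n ∪
      ((fun e => (((2:ℝ)^n, (0:ℝ)) + e.1, ((2:ℝ)^n, (0:ℝ)) + e.2)) '' gasketE n) ∪
      ((fun e => (((2:ℝ)^n/2, (2:ℝ)^n/2 * Real.sqrt 3) + e.1,
                  ((2:ℝ)^n/2, (2:ℝ)^n/2 * Real.sqrt 3) + e.2)) '' gasketE n)

/-- Vertices of the one-sided Sierpinski gasket graph `SG⁺`. -/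
def SGplusV : Set (ℝ × ℝ) := ⋃ n, gasketV n

/-- Edges of the one-sided Sierpinski gasket graph `SG⁺`. -/
def SGplusE : Set ((ℝ × ℝ) × (ℝ × ℝ)) := ⋃ n, gasketE n

/-- Reflection across the y-axis. -/
def reflect (p : ℝ × ℝ) : ℝ × ℝ := (-p.1, p.2)

/-- Vertices of the doubled Sierpinski gasket graph `SG`. -/
def SGV : Set (ℝ × ℝ) := SGplusV ∪ reflect '' SGplusV

/-- Adjacency (as points of the plane) in the doubled gasket. -/
def sgAdj (p q : ℝ × ℝ) : Prop :=
  (p, q) ∈ SGplusE ∨ (q, p) ∈ SGplusE ∨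
  (reflect p, reflect q) ∈ SGplusE ∨ (reflect q, reflect p) ∈ SGplusE

/-- The vertex type of the doubled Sierpinski gasket graph. -/
abbrev Vtx := {p : ℝ × ℝ // p ∈ SGV}

/-- The doubled Sierpinski gasket graph `SG` as a simple graph. -/
def SG : SimpleGraph Vtx where
  Adj x y := x ≠ y ∧ sgAdj x.1 y.1
  symm := by
    constructor
    rintro x y ⟨hne, h⟩
    refine ⟨hne.symm, ?_⟩
    unfold sgAdj at h ⊢
    tauto
  loopless := by constructor; rintro x ⟨hne, _⟩; exact hne rfl

lemma origin_mem : (((0:ℝ), (0:ℝ)) : ℝ × ℝ) ∈ SGV := by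
  left
  exact Set.mem_iUnion.2 ⟨0, by simp [gasketV]⟩

/-- The origin `∘ = (0,0)` of `SG`. -/
def origin : Vtx := ⟨((0:ℝ), (0:ℝ)), origin_mem⟩

/-- The closed graph-metric ball of (real) radius `r` around `x`. -/
def ball (x : Vtx) (r : ℝ) : Set Vtx := {z | (SG.dist x z : ℝ) ≤ r}

/-- `b_n = |B_∘(n)|`. -/
def bvol (n : ℕ) : ℕ := (ball origin n).ncard

/-- The inner boundary `∂_I A` of a set of vertices. -/
def innerBdry (A : Set Vtx) : Set Vtx := {y | y ∈ A ∧ ∃ z, SG.Adj y z ∧ z ∉ A}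

/-- Graph distance from a vertex to a set of vertices. -/
def distToSet (z : Vtx) (A : Set Vtx) : ℕ := sInf (SG.dist z '' A)

/-- Vertex degree. -/
def deg (x : Vtx) : ℕ := (SG.neighborSet x).ncard

/-- One-step transition probability of the simple random walk on `SG`. -/
def stepProb (x y : Vtx) : ℝ := if SG.Adj x y then 1 / (deg x : ℝ) else 0

/-- Probability that the simple random walk started at `x` follows the path `p`. -/
def pathWeight (x : Vtx) {t : ℕ} (p : Fin (t+1) → Vtx) : ℝ :=
  (if p 0 = x then 1 else 0) * ∏ j : Fin t, stepProb (p j.castSucc) (p j.succ)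

/-- Probability that the simple random walk started at `x` avoids `A` up to time `t`. -/
def stayProb (x : Vtx) (A : Set Vtx) (t : ℕ) : ℝ≥0∞ :=
  ∑' p : Fin (t+1) → Vtx,
    if ∀ j, p j ∉ A then ENNReal.ofReal (pathWeight x p) else 0

/-- The stopping set of `τ_x(r)`: `∂_I B_x(r) ∪ B_x(r)ᶜ`. -/
def stopSetAt (x : Vtx) (r : ℝ) : Set Vtx := innerBdry (ball x r) ∪ (ball x r)ᶜ

/-- `E_x(τ_x(r))`, the expected exit time, via `E τ = Σ_t P(τ > t)`. -/
def expExit (x : Vtx) (r : ℝ) : ℝ≥0∞ := ∑' t : ℕ, stayProb x (stopSetAt x r) t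

/-- `E_x(τ(n))` for the origin-centered exit time `τ(n)`. -/
def expExitO (x : Vtx) (n : ℕ) : ℝ≥0∞ := ∑' t : ℕ, stayProb x (stopSetAt origin n) t

/-- The stopped Green function `g_n(x,y)`, with values in `ℝ≥0∞`:
`g_n(x,y) = Σ_t P_x(X_t = y, τ(n) > t)`. -/
def greenE (n : ℕ) (x y : Vtx) : ℝ≥0∞ :=
  ∑' t : ℕ, ∑' p : Fin (t+1) → Vtx,
    if (∀ j, p j ∉ stopSetAt origin n) ∧ p (Fin.last t) = y
    then ENNReal.ofReal (pathWeight x p) else 0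

/-- The stopped Green function `g_n(x,y)` as a real number. -/
def green (n : ℕ) (x y : Vtx) : ℝ := (greenE n x y).toReal

/-- The (probabilistic) graph Laplacian on `SG`. -/
def lap (f : Vtx → ℝ) (x : Vtx) : ℝ :=
  (1 / (deg x : ℝ)) * (∑ᶠ y ∈ SG.neighborSet x, f y) - f x

/-- The indicator `δ_x` of a vertex. -/
def vtxInd (x : Vtx) : Vtx → ℝ := fun z => if z = x then 1 else 0

/-- The toppling operator `T_x μ = μ + max(μ(x)-1,0)·Δδ_x`. -/
def topple (x : Vtx) (μ : Vtx → ℝ) : Vtx → ℝ :=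
  fun z => μ z + max (μ x - 1) 0 * lap (vtxInd x) z

/-- `μ_k = T_{x_k} ⋯ T_{x_1} μ_0`. -/
def toppleIter (x : ℕ → Vtx) (μ0 : Vtx → ℝ) : ℕ → Vtx → ℝ
  | 0 => μ0
  | k+1 => topple (x k) (toppleIter x μ0 k)

/-- A toppling sequence visits every vertex infinitely often. -/
def IsTopplingSeq (x : ℕ → Vtx) : Prop := ∀ v : Vtx, {k | x k = v}.Infinite

/-- The odometer `u_k(y)`: mass emitted from `y` during the first `k` topplings. -/
def odom (x : ℕ → Vtx) (μ0 : Vtx → ℝ) (k : ℕ) (y : Vtx) : ℝ :=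
  ∑ j ∈ Finset.range k, if x j = y then max (toppleIter x μ0 j y - 1) 0 else 0

/-- A sand distribution: nonnegative with finite support. -/
def IsSandDist (μ : Vtx → ℝ) : Prop := (∀ z, 0 ≤ μ z) ∧ (Function.support μ).Finite

/-- `X i` is a family of independent simple random walks on `SG`, `X i` started at
`start i`; characterized through the finite-dimensional distributions. -/
def IsIndepSRWs {Ω : Type*} [MeasurableSpace Ω] (P : Measure Ω) {ι : Type*}
    (X : ι → ℕ → Ω → Vtx) (start : ι → Vtx) : Prop :=
  ∀ (s : Finset ι) (k : ℕ) (p : ι → ℕ → Vtx),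
    P {ω | ∀ i ∈ s, ∀ j ≤ k, X i j ω = p i j} =
      ∏ i ∈ s, ENNReal.ofReal (pathWeight (start i) (fun j : Fin (k+1) => p i (j : ℕ)))

/-- The IDLA cluster `I(i)` built from the walks `X 0, X 1, …`. -/
def idla {Ω : Type*} (X : ℕ → ℕ → Ω → Vtx) (ω : Ω) : ℕ → Set Vtx
  | 0 => ∅
  | i+1 => idla X ω i ∪ {X i (sInf {t | X i t ω ∉ idla X ω i}) ω}

/-- `I(S; x → A)` for a single particle with trajectory `w`. -/
def addStopped (A S : Set Vtx) (w : ℕ → Vtx) : Set Vtx :=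
  S ∪ {w (min (sInf {t | w t ∉ S}) (sInf {t | w t ∉ A} - 1))}

/-- `I(S; x_1,…,x_k → A)` for consecutive particles with trajectories `ws`. -/
def stoppedCluster (A : Set Vtx) : Set Vtx → List (ℕ → Vtx) → Set Vtx
  | S, [] => S
  | S, w :: ws => stoppedCluster A (addStopped A S w) ws

/-- The stopped IDLA cluster `I_{b_n}(∘ → n)`. -/
def stoppedIdla {Ω : Type*} (X : ℕ → ℕ → Ω → Vtx) (ω : Ω) (n : ℕ) : Set Vtx :=
  stoppedCluster (ball origin n) ∅ (List.ofFn (fun i : Fin (bvol n) => fun t => X (i : ℕ) t ω))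


/-! ### Auxiliary machinery for the ball-volume computation -/

lemma sqrt3_pos : (0:ℝ) < Real.sqrt 3 := Real.sqrt_pos.2 (by norm_num)

/-- Linear functional `F p = √3 x + y`. -/
def sgF (p : ℝ × ℝ) : ℝ := Real.sqrt 3 * p.1 + p.2

/-- Linear functional `G p = √3 x - y`. -/
def sgG (p : ℝ × ℝ) : ℝ := Real.sqrt 3 * p.1 - p.2

lemma gasketV_subset_succ (n : ℕ) : gasketV n ⊆ gasketV (n+1) :=
  fun _ hp => Or.inl (Or.inl hp)

lemma gasketE_subset_succ (n : ℕ) : gasketE n ⊆ gasketE (n+1) :=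
  fun _ he => Or.inl (Or.inl he)

lemma gasketV_mono {k n : ℕ} (h : k ≤ n) : gasketV k ⊆ gasketV n := by
  induction n with
  | zero => simp_all
  | succ n ih =>
    rcases Nat.lt_or_ge k (n+1) with h'|h'
    · exact (ih (Nat.lt_succ_iff.1 h')).trans (gasketV_subset_succ n)
    · have : k = n+1 := le_antisymm h h'
      subst this; exact subset_rfl

lemma gasketE_mono {k n : ℕ} (h : k ≤ n) : gasketE k ⊆ gasketE n := by
  induction n with
  | zero => simp_all
  | succ n ih =>
    rcases Nat.lt_or_ge k (n+1) with h'|h'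
    · exact (ih (Nat.lt_succ_iff.1 h')).trans (gasketE_subset_succ n)
    · have : k = n+1 := le_antisymm h h'
      subst this; exact subset_rfl

lemma gasketE_endpoints' {n : ℕ} : ∀ {e : (ℝ × ℝ) × (ℝ × ℝ)}, e ∈ gasketE n →
    e.1 ∈ gasketV n ∧ e.2 ∈ gasketV n := by
  induction n with
  | zero =>
    intro e he
    rcases he with h|h|h <;> subst h <;>
      constructor <;> simp [gasketV, gasketE]
  | succ n ih =>
    intro e he
    rcases he with (h|⟨e', he', rfl⟩)|⟨e', he', rfl⟩
    · exact ⟨gasketV_subset_succ n (ih h).1, gasketV_subset_succ n (ih h).2⟩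
    · exact ⟨Or.inl (Or.inr ⟨e'.1, (ih he').1, rfl⟩),
        Or.inl (Or.inr ⟨e'.2, (ih he').2, rfl⟩)⟩
    · exact ⟨Or.inr ⟨e'.1, (ih he').1, rfl⟩, Or.inr ⟨e'.2, (ih he').2, rfl⟩⟩

lemma gasketE_dir' {n : ℕ} : ∀ {e : (ℝ × ℝ) × (ℝ × ℝ)}, e ∈ gasketE n →
    e.2 - e.1 = ((1:ℝ), (0:ℝ)) ∨ e.2 - e.1 = ((1/2 : ℝ), Real.sqrt 3 / 2) ∨
      e.2 - e.1 = ((-(1/2) : ℝ), Real.sqrt 3 / 2) := by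
  induction n with
  | zero =>
    intro e he
    rcases he with h|h|h <;> subst h
    · left; simp [Prod.ext_iff]
    · right; right; simp [Prod.ext_iff]; norm_num
    · right; left; simp [Prod.ext_iff]
  | succ n ih =>
    intro e he
    rcases he with (h|⟨e', he', rfl⟩)|⟨e', he', rfl⟩
    · exact ih h
    · simpa using ih he'
    · simpa using ih he'

lemma gasketV_bounds' {n : ℕ} : ∀ {p : ℝ × ℝ}, p ∈ gasketV n →
    0 ≤ p.2 ∧ p.2 ≤ Real.sqrt 3 * p.1 ∧
      Real.sqrt 3 * p.1 + p.2 ≤ Real.sqrt 3 * 2 ^ n := by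
  have hs := sqrt3_pos
  induction n with
  | zero =>
    intro p hp
    rcases hp with h|h|h <;> subst h <;>
      refine ⟨by positivity, by simp <;> linarith, by simp <;> linarith⟩
  | succ n ih =>
    intro p hp
    have h2n : (0:ℝ) ≤ Real.sqrt 3 * 2 ^ n := by positivity
    rcases hp with (h|⟨w, hw, rfl⟩)|⟨w, hw, rfl⟩
    · obtain ⟨h1, h2, h3⟩ := ih h
      refine ⟨h1, h2, ?_⟩
      have : (Real.sqrt 3) * 2 ^ n ≤ Real.sqrt 3 * 2 ^ (n+1) := by
        rw [pow_succ]; nlinarith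
      linarith
    · obtain ⟨h1, h2, h3⟩ := ih hw
      have e1 : (((2:ℝ)^n, (0:ℝ)) + w).1 = 2^n + w.1 := rfl
      have e2 : (((2:ℝ)^n, (0:ℝ)) + w).2 = w.2 := by simp
      refine ⟨by rw [e2]; exact h1, ?_, ?_⟩
      · rw [e1, e2]; nlinarith
      · rw [e1, e2]; have : (2:ℝ)^(n+1) = 2^n + 2^n := by ring
        rw [this]; nlinarith
    · obtain ⟨h1, h2, h3⟩ := ih hw
      have e1 : (((2:ℝ)^n/2, (2:ℝ)^n/2 * Real.sqrt 3) + w).1 = 2^n/2 + w.1 := rfl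
      have e2 : (((2:ℝ)^n/2, (2:ℝ)^n/2 * Real.sqrt 3) + w).2
          = 2^n/2 * Real.sqrt 3 + w.2 := rfl
      refine ⟨?_, ?_, ?_⟩
      · rw [e2]; nlinarith
      · rw [e1, e2]; nlinarith
      · rw [e1, e2]; have : (2:ℝ)^(n+1) = 2^n + 2^n := by ring
        rw [this]; nlinarith

lemma gasketE_endpoints {n : ℕ} {e : (ℝ × ℝ) × (ℝ × ℝ)} (he : e ∈ gasketE n) :
    e.1 ∈ gasketV n ∧ e.2 ∈ gasketV n := gasketE_endpoints' he

lemma gasketE_dir {n : ℕ} {e : (ℝ × ℝ) × (ℝ × ℝ)} (he : e ∈ gasketE n) :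
    e.2 - e.1 = ((1:ℝ), (0:ℝ)) ∨ e.2 - e.1 = ((1/2 : ℝ), Real.sqrt 3 / 2) ∨
      e.2 - e.1 = ((-(1/2) : ℝ), Real.sqrt 3 / 2) := gasketE_dir' he

lemma gasketV_bounds {n : ℕ} {p : ℝ × ℝ} (hp : p ∈ gasketV n) :
    0 ≤ p.2 ∧ p.2 ≤ Real.sqrt 3 * p.1 ∧
      Real.sqrt 3 * p.1 + p.2 ≤ Real.sqrt 3 * 2 ^ n := gasketV_bounds' hp

lemma gasketV_fst_nonneg {n : ℕ} {p : ℝ × ℝ} (hp : p ∈ gasketV n) : 0 ≤ p.1 := by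
  obtain ⟨h1, h2, _⟩ := gasketV_bounds hp
  nlinarith [sqrt3_pos]

lemma gasketV_eq_zero_of_F {n : ℕ} {p : ℝ × ℝ} (hp : p ∈ gasketV n)
    (h : Real.sqrt 3 * p.1 + p.2 ≤ 0) : p = ((0:ℝ), (0:ℝ)) := by
  obtain ⟨h1, h2, _⟩ := gasketV_bounds hp
  have hx := gasketV_fst_nonneg hp
  have hs := sqrt3_pos
  have hy : p.2 = 0 := by nlinarith
  have hx0 : p.1 = 0 := by nlinarith
  exact Prod.ext hx0 hy

lemma origin_mem_gasketV (n : ℕ) : ((0:ℝ), (0:ℝ)) ∈ gasketV n :=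
  gasketV_mono (Nat.zero_le n) (by simp [gasketV])

lemma corner_mem (n : ℕ) : (((2:ℝ)^n, (0:ℝ))) ∈ gasketV n := by
  induction n with
  | zero => simp [gasketV]
  | succ n ih =>
    refine Or.inl (Or.inr ⟨((2:ℝ)^n, (0:ℝ)), ih, ?_⟩)
    simp [Prod.ext_iff]; ring

lemma apex_mem (n : ℕ) : (((2:ℝ)^n/2, (2:ℝ)^n/2 * Real.sqrt 3)) ∈ gasketV n := by
  induction n with
  | zero => simp [gasketV, Prod.ext_iff]; norm_num; ring
  | succ n ih =>
    refine Or.inr ⟨((2:ℝ)^n/2, (2:ℝ)^n/2 * Real.sqrt 3), ih, ?_⟩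
    simp [Prod.ext_iff]; constructor <;> ring

/-- Localization: vertices with small `F` lie in a small gasket. -/
lemma gasketV_local {k : ℕ} : ∀ {n : ℕ} {p : ℝ × ℝ}, p ∈ gasketV n →
    Real.sqrt 3 * p.1 + p.2 ≤ Real.sqrt 3 * 2 ^ k → p ∈ gasketV k := by
  intro n
  induction n with
  | zero => intro p hp _; exact gasketV_mono (Nat.zero_le k) hp
  | succ n ih =>
    intro p hp hF
    rcases le_or_gt (n+1) k with hnk|hnk
    · exact gasketV_mono hnk hp
    · have hnk' : k ≤ n := Nat.lt_succ_iff.1 hnk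
      have hs := sqrt3_pos
      have h2 : (2:ℝ)^k ≤ 2^n := by
        apply pow_le_pow_right₀ (by norm_num) hnk'
      rcases hp with (h|⟨w, hw, rfl⟩)|⟨w, hw, rfl⟩
      · exact ih h hF
      · have e1 : (((2:ℝ)^n, (0:ℝ)) + w).1 = 2^n + w.1 := rfl
        have e2 : (((2:ℝ)^n, (0:ℝ)) + w).2 = w.2 := by simp
        rw [e1, e2] at hF
        have hw0 : w = ((0:ℝ),(0:ℝ)) := by
          apply gasketV_eq_zero_of_F hw
          nlinarith
        subst hw0
        show ((2:ℝ)^n, (0:ℝ)) + ((0:ℝ),(0:ℝ)) ∈ gasketV k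
        rw [show ((2:ℝ)^n, (0:ℝ)) + ((0:ℝ),(0:ℝ)) = ((2:ℝ)^n, (0:ℝ)) by simp]
        -- F = √3·2^n ≤ √3·2^k forces 2^n ≤ 2^k, so n ≤ k, so n = k
        simp only [Prod.fst_zero, Prod.snd_zero] at hF
        have h2' : (2:ℝ)^n ≤ 2^k := by nlinarith
        have : (2:ℝ)^n = 2^k := le_antisymm h2' h2
        rw [this]; exact corner_mem k
      · have e1 : (((2:ℝ)^n/2, (2:ℝ)^n/2 * Real.sqrt 3) + w).1 = 2^n/2 + w.1 := rfl
        have e2 : (((2:ℝ)^n/2, (2:ℝ)^n/2 * Real.sqrt 3) + w).2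
            = 2^n/2 * Real.sqrt 3 + w.2 := rfl
        rw [e1, e2] at hF
        have hw0 : w = ((0:ℝ),(0:ℝ)) := by
          apply gasketV_eq_zero_of_F hw
          nlinarith
        subst hw0
        show ((2:ℝ)^n/2, (2:ℝ)^n/2 * Real.sqrt 3) + ((0:ℝ),(0:ℝ)) ∈ gasketV k
        rw [show ((2:ℝ)^n/2, (2:ℝ)^n/2 * Real.sqrt 3) + ((0:ℝ),(0:ℝ))
            = ((2:ℝ)^n/2, (2:ℝ)^n/2 * Real.sqrt 3) by simp]
        simp only [Prod.fst_zero, Prod.snd_zero] at hF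
        have h2' : (2:ℝ)^n ≤ 2^k := by nlinarith
        have h2eq : (2:ℝ)^n = 2^k := le_antisymm h2' h2
        rw [h2eq]; exact apex_mem k

/-- There is an edge-chain of length `m` inside `E_n` from `p` to `q`. -/
def reachE (n : ℕ) : ℕ → (ℝ × ℝ) → (ℝ × ℝ) → Prop
  | 0, p, q => p = q
  | m+1, p, q => ∃ r, ((p, r) ∈ gasketE n ∨ (r, p) ∈ gasketE n) ∧ reachE n m r q

lemma reachE_mono {n n' : ℕ} (h : n ≤ n') : ∀ {m : ℕ} {p q : ℝ × ℝ},
    reachE n m p q → reachE n' m p q := by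
  intro m
  induction m with
  | zero => intro p q h'; exact h'
  | succ m ih =>
    rintro p q ⟨r, hr, h2⟩
    exact ⟨r, hr.imp (fun h' => gasketE_mono h h') (fun h' => gasketE_mono h h'), ih h2⟩

lemma reachE_trans {n : ℕ} : ∀ {m m' : ℕ} {p q r : ℝ × ℝ},
    reachE n m p q → reachE n m' q r → reachE n (m + m') p r := by
  intro m
  induction m with
  | zero =>
    intro m' p q r h1 h2
    rw [Nat.zero_add]
    exact h1 ▸ h2
  | succ m ih =>
    rintro m' p q r ⟨s, hs, h1⟩ h2
    rw [Nat.succ_add]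
    exact ⟨s, hs, ih h1 h2⟩

lemma reachE_translate {n : ℕ} {v : ℝ × ℝ}
    (hv : ∀ e ∈ gasketE n, ((v + e.1, v + e.2) : (ℝ × ℝ) × (ℝ × ℝ)) ∈ gasketE (n+1)) :
    ∀ {m : ℕ} {p q : ℝ × ℝ}, reachE n m p q → reachE (n+1) m (v + p) (v + q) := by
  intro m
  induction m with
  | zero => intro p q h; exact congrArg (v + ·) h
  | succ m ih =>
    rintro p q ⟨r, hr, h2⟩
    refine ⟨v + r, ?_, ih h2⟩
    rcases hr with h|h
    · exact Or.inl (hv _ h)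
    · exact Or.inr (hv _ h)

lemma reach_glue {n N1 N2 : ℕ} {p q r : ℝ × ℝ}
    (h1 : ∃ m ≤ N1, reachE n m p q) (h2 : ∃ m ≤ N2, reachE n m q r) :
    ∃ m ≤ N1 + N2, reachE n m p r := by
  obtain ⟨m1, hm1, c1⟩ := h1; obtain ⟨m2, hm2, c2⟩ := h2
  exact ⟨m1 + m2, Nat.add_le_add hm1 hm2, reachE_trans c1 c2⟩

lemma reach_up {n N : ℕ} {p q : ℝ × ℝ} (h : ∃ m ≤ N, reachE n m p q) :
    ∃ m ≤ N, reachE (n+1) m p q := by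
  obtain ⟨m, hm, c⟩ := h
  exact ⟨m, hm, reachE_mono (Nat.le_succ n) c⟩

lemma reach_tr_right {n N : ℕ} {p q : ℝ × ℝ} (h : ∃ m ≤ N, reachE n m p q) :
    ∃ m ≤ N, reachE (n+1) m (((2:ℝ)^n, (0:ℝ)) + p) (((2:ℝ)^n, (0:ℝ)) + q) := by
  obtain ⟨m, hm, c⟩ := h
  exact ⟨m, hm, reachE_translate (fun e he => Or.inl (Or.inr ⟨e, he, rfl⟩)) c⟩

lemma reach_tr_top {n N : ℕ} {p q : ℝ × ℝ} (h : ∃ m ≤ N, reachE n m p q) :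
    ∃ m ≤ N, reachE (n+1) m (((2:ℝ)^n/2, (2:ℝ)^n/2 * Real.sqrt 3) + p)
      (((2:ℝ)^n/2, (2:ℝ)^n/2 * Real.sqrt 3) + q) := by
  obtain ⟨m, hm, c⟩ := h
  exact ⟨m, hm, reachE_translate (fun e he => Or.inr ⟨e, he, rfl⟩) c⟩

lemma reachE_single {n : ℕ} {p q : ℝ × ℝ}
    (h : (p, q) ∈ gasketE n ∨ (q, p) ∈ gasketE n) : reachE n 1 p q :=
  ⟨q, h, rfl⟩

/-- From every corner of the level-`n` triangle, every vertex of `V_n` is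
reachable within `2^n` steps using edges of `E_n`. -/
lemma corner_reach : ∀ (n : ℕ) (p : ℝ × ℝ), p ∈ gasketV n →
    (∃ m ≤ 2^n, reachE n m ((0:ℝ),(0:ℝ)) p) ∧
    (∃ m ≤ 2^n, reachE n m (((2:ℝ)^n, (0:ℝ))) p) ∧
    (∃ m ≤ 2^n, reachE n m (((2:ℝ)^n/2, (2:ℝ)^n/2 * Real.sqrt 3)) p) := by
  intro n
  induction n with
  | zero =>
    intro p hp
    have hA : ((2:ℝ)^0, (0:ℝ)) = ((1:ℝ), (0:ℝ)) := by norm_num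
    have hB : (((2:ℝ)^0/2, (2:ℝ)^0/2 * Real.sqrt 3) : ℝ × ℝ)
        = ((1/2 : ℝ), Real.sqrt 3 / 2) := by
      norm_num [Prod.ext_iff]; ring
    rw [hA, hB]
    have e1 : ((((0:ℝ),(0:ℝ)), ((1:ℝ),(0:ℝ))) : (ℝ×ℝ)×(ℝ×ℝ)) ∈ gasketE 0 := by
      simp [gasketE]
    have e2 : ((((1:ℝ),(0:ℝ)), ((1/2:ℝ), Real.sqrt 3 / 2)) : (ℝ×ℝ)×(ℝ×ℝ)) ∈ gasketE 0 := by
      simp [gasketE]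
    have e3 : ((((0:ℝ),(0:ℝ)), ((1/2:ℝ), Real.sqrt 3 / 2)) : (ℝ×ℝ)×(ℝ×ℝ)) ∈ gasketE 0 := by
      simp [gasketE]
    rcases hp with h|h|h <;> subst h
    · exact ⟨⟨0, by norm_num, rfl⟩, ⟨1, le_refl _, reachE_single (Or.inr e1)⟩,
        ⟨1, le_refl _, reachE_single (Or.inr e3)⟩⟩
    · exact ⟨⟨1, le_refl _, reachE_single (Or.inl e1)⟩, ⟨0, by norm_num, rfl⟩,
        ⟨1, le_refl _, reachE_single (Or.inr e2)⟩⟩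
    · exact ⟨⟨1, le_refl _, reachE_single (Or.inl e3)⟩,
        ⟨1, le_refl _, reachE_single (Or.inl e2)⟩, ⟨0, by norm_num, rfl⟩⟩
  | succ n ih =>
    intro p hp
    -- abbreviations
    set O : ℝ × ℝ := ((0:ℝ),(0:ℝ)) with hO
    set Rn : ℝ × ℝ := ((2:ℝ)^n, (0:ℝ)) with hRn
    set An : ℝ × ℝ := ((2:ℝ)^n/2, (2:ℝ)^n/2 * Real.sqrt 3) with hAn
    have eR : ((2:ℝ)^(n+1), (0:ℝ)) = Rn + Rn := by
      simp [hRn, Prod.ext_iff]; ring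
    have eA : (((2:ℝ)^(n+1)/2, (2:ℝ)^(n+1)/2 * Real.sqrt 3) : ℝ × ℝ) = An + An := by
      simp [hAn, Prod.ext_iff]; constructor <;> ring
    have eRO : Rn + O = Rn := by simp [hO]
    have eAO : An + O = An := by simp [hO]
    have eM : Rn + An = An + Rn := by rw [add_comm]
    have hbd : (2:ℕ)^n + 2^n ≤ 2^(n+1) := by rw [pow_succ]; omega
    have hle : (2:ℕ)^n ≤ 2^(n+1) := by rw [pow_succ]; omega
    have bound : ∀ {x y : ℝ × ℝ}, (∃ m ≤ 2^n + 2^n, reachE (n+1) m x y) →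
        ∃ m ≤ 2^(n+1), reachE (n+1) m x y := by
      rintro x y ⟨m, hm, c⟩; exact ⟨m, hm.trans hbd, c⟩
    have bound1 : ∀ {x y : ℝ × ℝ}, (∃ m ≤ 2^n, reachE (n+1) m x y) →
        ∃ m ≤ 2^(n+1), reachE (n+1) m x y := by
      rintro x y ⟨m, hm, c⟩; exact ⟨m, hm.trans hle, c⟩
    -- reaches to corners of the small triangle (as elements of V n)
    have hRmem := corner_mem n
    have hAmem := apex_mem n
    rcases hp with (h|⟨w, hw, rfl⟩)|⟨w, hw, rfl⟩
    · -- p in base copy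
      obtain ⟨pO, pR, pA⟩ := ih p h
      refine ⟨bound1 (reach_up pO), ?_, ?_⟩
      · -- from R(n+1) = Rn + Rn
        rw [eR]
        have c1 : ∃ m ≤ 2^n, reachE (n+1) m (Rn + Rn) (Rn + O) :=
          reach_tr_right (ih O (origin_mem_gasketV n)).2.1
        rw [eRO] at c1
        exact bound (reach_glue c1 (reach_up pR))
      · rw [eA]
        have c1 : ∃ m ≤ 2^n, reachE (n+1) m (An + An) (An + O) :=
          reach_tr_top (ih O (origin_mem_gasketV n)).2.2
        rw [eAO] at c1
        exact bound (reach_glue c1 (reach_up pA))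
    · -- p = Rn + w in right copy
      obtain ⟨wO, wR, wA⟩ := ih w hw
      refine ⟨?_, ?_, ?_⟩
      · -- O → Rn → Rn + w
        have c1 : ∃ m ≤ 2^n, reachE (n+1) m O Rn := reach_up (ih Rn hRmem).1
        have c2 : ∃ m ≤ 2^n, reachE (n+1) m (Rn + O) (Rn + w) := reach_tr_right wO
        rw [eRO] at c2
        exact bound (reach_glue c1 c2)
      · rw [eR]
        exact bound1 (reach_tr_right wR)
      · -- A(n+1) = An + An → An + Rn = Rn + An → Rn + w
        rw [eA]
        have c1 : ∃ m ≤ 2^n, reachE (n+1) m (An + An) (An + Rn) :=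
          reach_tr_top (ih Rn hRmem).2.2
        rw [← eM] at c1
        have c2 : ∃ m ≤ 2^n, reachE (n+1) m (Rn + An) (Rn + w) := reach_tr_right wA
        exact bound (reach_glue c1 c2)
    · -- p = An + w in top copy
      obtain ⟨wO, wR, wA⟩ := ih w hw
      refine ⟨?_, ?_, ?_⟩
      · have c1 : ∃ m ≤ 2^n, reachE (n+1) m O An := reach_up (ih An hAmem).1
        have c2 : ∃ m ≤ 2^n, reachE (n+1) m (An + O) (An + w) := reach_tr_top wO
        rw [eAO] at c2
        exact bound (reach_glue c1 c2)
      · rw [eR]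
        have c1 : ∃ m ≤ 2^n, reachE (n+1) m (Rn + Rn) (Rn + An) :=
          reach_tr_right (ih An hAmem).2.1
        rw [eM] at c1
        have c2 : ∃ m ≤ 2^n, reachE (n+1) m (An + Rn) (An + w) := reach_tr_top wR
        exact bound (reach_glue c1 c2)
      · rw [eA]
        exact bound1 (reach_tr_top wA)

lemma gasketV_SGplus {n : ℕ} {p : ℝ × ℝ} (hp : p ∈ gasketV n) : p ∈ SGplusV :=
  Set.mem_iUnion.2 ⟨n, hp⟩

lemma gasketE_ne {n : ℕ} {e : (ℝ × ℝ) × (ℝ × ℝ)} (he : e ∈ gasketE n) :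
    e.1 ≠ e.2 := by
  intro h
  rcases gasketE_dir he with hd|hd|hd <;>
  · rw [← h, sub_self] at hd
    have := congrArg Prod.fst hd
    norm_num at this

lemma reflect_reflect (p : ℝ × ℝ) : reflect (reflect p) = p := by
  simp [reflect]

lemma sq3_nonneg : (0:ℝ) ≤ Real.sqrt 3 := sqrt3_pos.le

/-- Chains mapped into `SG` via a map `φ` bound the extended graph distance. -/
lemma edist_reach {φ : ℝ × ℝ → ℝ × ℝ}
    (hmem : ∀ p, p ∈ SGplusV → φ p ∈ SGV)
    (hadj : ∀ a b, (a, b) ∈ SGplusE → sgAdj (φ a) (φ b))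
    (hinj : ∀ a b, φ a = φ b → a = b) {n : ℕ} :
    ∀ {m : ℕ} {p q : ℝ × ℝ}, reachE n m p q →
      ∀ (hp : p ∈ gasketV n) (hq : q ∈ gasketV n),
      SG.edist ⟨φ p, hmem p (gasketV_SGplus hp)⟩ ⟨φ q, hmem q (gasketV_SGplus hq)⟩
        ≤ (m : ℕ∞) := by
  intro m
  induction m with
  | zero =>
    intro p q c hp hq
    have hpq : p = q := c
    subst hpq
    simp [SimpleGraph.edist_self]
  | succ m ih =>
    rintro p q ⟨r, hr, c⟩ hp hq
    have hrV : r ∈ gasketV n := by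
      rcases hr with h|h
      · exact (gasketE_endpoints h).2
      · exact (gasketE_endpoints h).1
    have hne : p ≠ r := by
      rcases hr with h|h
      · exact gasketE_ne h
      · exact (gasketE_ne h).symm
    have hAdj : SG.Adj ⟨φ p, hmem p (gasketV_SGplus hp)⟩ ⟨φ r, hmem r (gasketV_SGplus hrV)⟩ := by
      refine ⟨fun hh => hne (hinj _ _ (congrArg Subtype.val hh)), ?_⟩
      rcases hr with h|h
      · exact hadj _ _ (Set.mem_iUnion.2 ⟨n, h⟩)
      · have := hadj _ _ (Set.mem_iUnion.2 ⟨n, h⟩)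
        unfold sgAdj at this ⊢
        tauto
    have h1 : SG.edist ⟨φ p, hmem p (gasketV_SGplus hp)⟩ ⟨φ r, hmem r (gasketV_SGplus hrV)⟩
        ≤ 1 := by
      simpa using SG.edist_le hAdj.toWalk
    calc SG.edist ⟨φ p, hmem p (gasketV_SGplus hp)⟩ ⟨φ q, hmem q (gasketV_SGplus hq)⟩
        ≤ SG.edist ⟨φ p, hmem p (gasketV_SGplus hp)⟩ ⟨φ r, hmem r (gasketV_SGplus hrV)⟩
          + SG.edist ⟨φ r, hmem r (gasketV_SGplus hrV)⟩ ⟨φ q, hmem q (gasketV_SGplus hq)⟩ :=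
        SimpleGraph.edist_triangle
      _ ≤ 1 + (m : ℕ∞) := add_le_add h1 (ih c hrV hq)
      _ = ((m + 1 : ℕ) : ℕ∞) := by push_cast; rw [add_comm]

lemma id_hmem : ∀ p, p ∈ SGplusV → p ∈ SGV := fun _ h => Or.inl h

lemma reflect_hmem : ∀ p, p ∈ SGplusV → reflect p ∈ SGV := fun p h => Or.inr ⟨p, h, rfl⟩

lemma id_hadj : ∀ a b, (a, b) ∈ SGplusE → sgAdj a b := fun _ _ h => Or.inl h

lemma reflect_hadj : ∀ a b, (a, b) ∈ SGplusE → sgAdj (reflect a) (reflect b) := by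
  intro a b h
  right; right; left
  rw [reflect_reflect, reflect_reflect]
  exact h

lemma reflect_inj : ∀ a b : ℝ × ℝ, reflect a = reflect b → a = b := by
  intro a b h
  have := congrArg reflect h
  rwa [reflect_reflect, reflect_reflect] at this

lemma origin_eq (h : (((0:ℝ),(0:ℝ)) : ℝ × ℝ) ∈ SGV) : (⟨((0:ℝ),(0:ℝ)), h⟩ : Vtx) = origin :=
  Subtype.ext rfl

/-- Points of `V_k` are within extended distance `2^k` of the origin. -/
lemma edist_origin_le {k : ℕ} (z : Vtx) (hz : z.1 ∈ gasketV k) :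
    SG.edist origin z ≤ ((2^k : ℕ) : ℕ∞) := by
  obtain ⟨m, hm, c⟩ := (corner_reach k z.1 hz).1
  have := edist_reach id_hmem id_hadj (fun _ _ h => h) c (origin_mem_gasketV k) hz
  have heq1 : (⟨((0:ℝ),(0:ℝ)), id_hmem _ (gasketV_SGplus (origin_mem_gasketV k))⟩ : Vtx)
      = origin := Subtype.ext rfl
  have heq2 : (⟨z.1, id_hmem _ (gasketV_SGplus hz)⟩ : Vtx) = z := Subtype.ext rfl
  rw [heq1, heq2] at this
  exact this.trans (by exact_mod_cast Nat.cast_le.2 hm)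

/-- Reflected points of `V_k` are within extended distance `2^k` of the origin. -/
lemma edist_origin_le_reflect {k : ℕ} (z : Vtx) {p : ℝ × ℝ} (hp : p ∈ gasketV k)
    (hz : z.1 = reflect p) : SG.edist origin z ≤ ((2^k : ℕ) : ℕ∞) := by
  obtain ⟨m, hm, c⟩ := (corner_reach k p hp).1
  have := edist_reach reflect_hmem reflect_hadj reflect_inj c (origin_mem_gasketV k) hp
  have heq1 : (⟨reflect ((0:ℝ),(0:ℝ)), reflect_hmem _ (gasketV_SGplus (origin_mem_gasketV k))⟩ : Vtx)
      = origin := Subtype.ext (by simp [reflect]; rfl)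
  have heq2 : (⟨reflect p, reflect_hmem _ (gasketV_SGplus hp)⟩ : Vtx) = z :=
    Subtype.ext hz.symm
  rw [heq1, heq2] at this
  exact this.trans (by exact_mod_cast Nat.cast_le.2 hm)

lemma reachable_origin (z : Vtx) : SG.Reachable origin z := by
  have h : SG.edist origin z ≠ ⊤ := by
    rcases z.2 with h|⟨p, hp, hrefl⟩
    · obtain ⟨n, hn⟩ := Set.mem_iUnion.1 h
      exact ne_top_of_le_ne_top (ENat.coe_ne_top _) (edist_origin_le z hn)
    · obtain ⟨n, hn⟩ := Set.mem_iUnion.1 hp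
      exact ne_top_of_le_ne_top (ENat.coe_ne_top _) (edist_origin_le_reflect z hn hrefl.symm)
  exact SG.reachable_of_edist_ne_top h

/-- The Lipschitz functional `h p = √3 |x| + y` on the doubled gasket. -/
def hfun (p : ℝ × ℝ) : ℝ := Real.sqrt 3 * |p.1| + p.2

lemma hfun_reflect (p : ℝ × ℝ) : hfun (reflect p) = hfun p := by
  simp [hfun, reflect, abs_neg]

lemma hfun_eq_F {n : ℕ} {p : ℝ × ℝ} (hp : p ∈ gasketV n) :
    hfun p = Real.sqrt 3 * p.1 + p.2 := by
  rw [hfun, abs_of_nonneg (gasketV_fst_nonneg hp)]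

lemma hfun_edge {a b : ℝ × ℝ} (hab : (a, b) ∈ SGplusE) :
    |hfun b - hfun a| ≤ Real.sqrt 3 := by
  obtain ⟨n, h⟩ := Set.mem_iUnion.1 hab
  have ha := (gasketE_endpoints h).1
  have hb := (gasketE_endpoints h).2
  rw [hfun_eq_F ha, hfun_eq_F hb]
  have hd := gasketE_dir h
  rcases hd with hd|hd|hd <;>
  · have e1 := congrArg Prod.fst hd
    have e2 := congrArg Prod.snd hd
    simp only [Prod.fst_sub, Prod.snd_sub] at e1 e2
    rw [abs_le]
    constructor <;> nlinarith [sqrt3_pos]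

lemma hfun_adj {x y : Vtx} (h : SG.Adj x y) : |hfun y.1 - hfun x.1| ≤ Real.sqrt 3 := by
  rcases h.2 with h'|h'|h'|h'
  · exact hfun_edge h'
  · rw [abs_sub_comm]; exact hfun_edge h'
  · rw [← hfun_reflect y.1, ← hfun_reflect x.1]; exact hfun_edge h'
  · rw [← hfun_reflect y.1, ← hfun_reflect x.1, abs_sub_comm]; exact hfun_edge h'

lemma hfun_walk {x y : Vtx} (w : SG.Walk x y) :
    |hfun y.1 - hfun x.1| ≤ Real.sqrt 3 * w.length := by
  induction w with
  | nil => simp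
  | @cons a b c h w ih =>
    have h1 := hfun_adj h
    have h2 : |hfun c.1 - hfun a.1| ≤ |hfun c.1 - hfun b.1| + |hfun b.1 - hfun a.1| :=
      abs_sub_le _ _ _
    rw [SimpleGraph.Walk.length_cons]
    push_cast
    nlinarith [sq3_nonneg]

lemma dist_le_of_mem {k : ℕ} (z : Vtx) (hz : z.1 ∈ gasketV k ∪ reflect '' gasketV k) :
    SG.dist origin z ≤ 2 ^ k := by
  have hE : SG.edist origin z ≤ ((2^k : ℕ) : ℕ∞) := by
    rcases hz with h|⟨p, hp, hrefl⟩
    · exact edist_origin_le z h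
    · exact edist_origin_le_reflect z hp hrefl.symm
  exact ENat.toNat_le_of_le_coe hE

lemma mem_of_dist_le {k : ℕ} (z : Vtx) (hz : SG.dist origin z ≤ 2 ^ k) :
    z.1 ∈ gasketV k ∪ reflect '' gasketV k := by
  obtain ⟨w, hw⟩ := (reachable_origin z).exists_walk_length_eq_edist
  have hlen : w.length = SG.dist origin z := by
    rw [SimpleGraph.dist]
    rw [← hw]
    simp
  have hwk : (w.length : ℝ) ≤ (2:ℝ)^k := by
    rw [hlen]
    calc (SG.dist origin z : ℝ) ≤ ((2^k : ℕ) : ℝ) := by exact_mod_cast hz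
      _ = (2:ℝ)^k := by push_cast; ring
  have hbound := hfun_walk w
  have horig : hfun origin.1 = 0 := by simp [hfun, origin]
  rw [horig, sub_zero] at hbound
  have hfz : hfun z.1 ≤ Real.sqrt 3 * 2^k := by
    have := (abs_le.1 hbound).2
    nlinarith [sq3_nonneg]
  rcases z.2 with h|⟨p, hp, hrefl⟩
  · obtain ⟨n, hn⟩ := Set.mem_iUnion.1 h
    left
    apply gasketV_local hn
    rw [← hfun_eq_F hn]
    exact hfz
  · obtain ⟨n, hn⟩ := Set.mem_iUnion.1 hp
    right
    refine ⟨p, ?_, hrefl⟩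
    apply gasketV_local hn
    rw [← hfun_eq_F hn, ← hfun_reflect p, hrefl]
    exact hfz

lemma ball_eq (k : ℕ) : ball origin ((2^k : ℕ) : ℝ)
    = Subtype.val ⁻¹' (gasketV k ∪ reflect '' gasketV k) := by
  ext z
  constructor
  · intro hz
    have : SG.dist origin z ≤ 2^k := by
      have := hz
      simp only [ball, Set.mem_setOf_eq] at this
      exact_mod_cast this
    exact mem_of_dist_le z this
  · intro hz
    have := dist_le_of_mem z hz
    simp only [ball, Set.mem_setOf_eq]
    exact_mod_cast this

lemma gasketV_finite (n : ℕ) : (gasketV n).Finite := by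
  induction n with
  | zero =>
    exact (Set.finite_singleton _).insert _ |>.insert _
  | succ n ih =>
    exact ((ih.union (ih.image _)).union (ih.image _))

lemma apex_snd_pos (n : ℕ) : (0:ℝ) < (2:ℝ)^n/2 * Real.sqrt 3 := by
  have := sqrt3_pos; positivity

lemma gasketV_card : ∀ n : ℕ, 2 * (gasketV n).ncard = 3 ^ (n+1) + 3 := by
  intro n
  induction n with
  | zero =>
    have h1 : (((0:ℝ),(0:ℝ)) : ℝ × ℝ) ≠ ((1:ℝ),(0:ℝ)) := by
      intro h; have := congrArg Prod.fst h; norm_num at this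
    have h2 : (((0:ℝ),(0:ℝ)) : ℝ × ℝ) ≠ ((1/2:ℝ), Real.sqrt 3 / 2) := by
      intro h; have := congrArg Prod.fst h; norm_num at this
    have h3 : (((1:ℝ),(0:ℝ)) : ℝ × ℝ) ≠ ((1/2:ℝ), Real.sqrt 3 / 2) := by
      intro h; have := congrArg Prod.fst h; norm_num at this
    have : (gasketV 0).ncard = 3 := by
      show ({((0:ℝ),(0:ℝ)), ((1:ℝ),(0:ℝ)), ((1/2:ℝ), Real.sqrt 3/2)} : Set (ℝ × ℝ)).ncard = 3
      rw [Set.ncard_insert_of_notMem (by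
          intro hmem
          simp only [Set.mem_insert_iff, Set.mem_singleton_iff] at hmem
          rcases hmem with h|h
          · exact h1 h
          · exact h2 h) ((Set.finite_singleton _).insert _),
        Set.ncard_pair h3]
    rw [this]
    norm_num
  | succ n ih =>
    have hs := sqrt3_pos
    set A := gasketV n with hA
    set B := (fun p => (((2:ℝ)^n, (0:ℝ)) + p)) '' gasketV n with hB
    set C := (fun p => (((2:ℝ)^n/2, (2:ℝ)^n/2 * Real.sqrt 3) + p)) '' gasketV n with hC
    have hfinA : A.Finite := gasketV_finite n
    have hfinB : B.Finite := hfinA.image _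
    have hfinC : C.Finite := hfinA.image _
    have hcardB : B.ncard = A.ncard := Set.ncard_image_of_injective _ (add_right_injective _)
    have hcardC : C.ncard = A.ncard := Set.ncard_image_of_injective _ (add_right_injective _)
    set Rn : ℝ × ℝ := ((2:ℝ)^n, (0:ℝ)) with hRn
    set An : ℝ × ℝ := ((2:ℝ)^n/2, (2:ℝ)^n/2 * Real.sqrt 3) with hAn
    -- A ∩ B = {Rn}
    have hAB : A ∩ B = {Rn} := by
      ext p
      constructor
      · rintro ⟨hpA, w, hw, rfl⟩
        obtain ⟨_, _, hF⟩ := gasketV_bounds hpA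
        obtain ⟨hw1, hw2, _⟩ := gasketV_bounds hw
        have e1 : (Rn + w).1 = 2^n + w.1 := rfl
        have e2 : (Rn + w).2 = w.2 := by simp [hRn]
        rw [e1, e2] at hF
        have hwx := gasketV_fst_nonneg hw
        have hw0 : w = ((0:ℝ),(0:ℝ)) := by
          apply gasketV_eq_zero_of_F hw; nlinarith
        rw [hw0]
        simp [hRn]
      · rintro rfl
        exact ⟨corner_mem n, ((0:ℝ),(0:ℝ)), origin_mem_gasketV n, by simp [hRn]⟩
    -- A ∩ C = {An}
    have hAC : A ∩ C = {An} := by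
      ext p
      constructor
      · rintro ⟨hpA, w, hw, rfl⟩
        obtain ⟨_, _, hF⟩ := gasketV_bounds hpA
        obtain ⟨hw1, hw2, _⟩ := gasketV_bounds hw
        have e1 : (An + w).1 = 2^n/2 + w.1 := rfl
        have e2 : (An + w).2 = 2^n/2 * Real.sqrt 3 + w.2 := rfl
        rw [e1, e2] at hF
        have hwx := gasketV_fst_nonneg hw
        have hw0 : w = ((0:ℝ),(0:ℝ)) := by
          apply gasketV_eq_zero_of_F hw; nlinarith
        rw [hw0]
        simp [hAn]
      · rintro rfl
        exact ⟨apex_mem n, ((0:ℝ),(0:ℝ)), origin_mem_gasketV n, by simp [hAn]⟩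
    -- B ∩ C = {An + Rn}
    have hBC : B ∩ C = {An + Rn} := by
      ext p
      constructor
      · rintro ⟨⟨w, hw, rfl⟩, w', hw', heq⟩
        obtain ⟨hw1, hw2, hw3⟩ := gasketV_bounds hw
        obtain ⟨hw1', hw2', hw3'⟩ := gasketV_bounds hw'
        have hwx := gasketV_fst_nonneg hw
        have hwx' := gasketV_fst_nonneg hw'
        -- coordinates of the equality
        have c1 : 2^n/2 + w'.1 = (2:ℝ)^n + w.1 := congrArg Prod.fst heq
        have c2 : 2^n/2 * Real.sqrt 3 + w'.2 = (0:ℝ) + w.2 := congrArg Prod.snd heq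
        have hy0 : w'.2 = 0 := by nlinarith
        have hx' : w'.1 = 2^n := by nlinarith
        have hw'0 : w' = Rn := Prod.ext hx' hy0
        rw [hw'0] at heq
        refine Set.mem_singleton_iff.2 ?_
        rw [← heq]
      · rintro rfl
        constructor
        · exact ⟨An, apex_mem n, by rw [add_comm]⟩
        · exact ⟨Rn, corner_mem n, rfl⟩
    have hRA : Rn ≠ An := by
      intro h
      have := congrArg Prod.snd h
      have := apex_snd_pos n
      simp only [hRn, hAn] at *
      nlinarith
    have hAnAR : An ≠ An + Rn := by
      intro h
      have h1 := congrArg Prod.fst h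
      have : (An + Rn).1 = 2^n/2 + 2^n := rfl
      rw [this] at h1
      have h2 : (0:ℝ) < 2^n := by positivity
      simp only [hAn] at h1
      nlinarith
    -- inclusion-exclusion
    have hab := Set.ncard_union_add_ncard_inter A B hfinA hfinB
    rw [hAB, Set.ncard_singleton] at hab
    have habc := Set.ncard_union_add_ncard_inter (A ∪ B) C (hfinA.union hfinB) hfinC
    have hint : (A ∪ B) ∩ C = {An, An + Rn} := by
      rw [Set.union_inter_distrib_right, hAC, hBC]
      rfl
    rw [hint, Set.ncard_pair hAnAR] at habc
    have hV : gasketV (n+1) = (A ∪ B) ∪ C := rfl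
    rw [hV]
    have h3 : 3^(n+1+1) = 3 * 3^(n+1) := by ring
    omega

lemma reflect_origin_eq : reflect ((0:ℝ),(0:ℝ)) = ((0:ℝ),(0:ℝ)) := by
  simp [reflect]

lemma inter_reflect (k : ℕ) :
    gasketV k ∩ (reflect '' gasketV k) = {((0:ℝ),(0:ℝ))} := by
  ext p
  constructor
  · rintro ⟨hpA, q, hq, rfl⟩
    have h1 := gasketV_fst_nonneg hpA
    have h2 := gasketV_fst_nonneg hq
    have e1 : (reflect q).1 = -q.1 := rfl
    rw [e1] at h1
    have hq1 : q.1 = 0 := by linarith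
    obtain ⟨hy1, hy2, _⟩ := gasketV_bounds hq
    have hs := sqrt3_pos
    have hq2 : q.2 = 0 := by nlinarith
    simp [reflect, hq1, hq2]
  · rintro rfl
    exact ⟨origin_mem_gasketV k, ((0:ℝ),(0:ℝ)), origin_mem_gasketV k, reflect_origin_eq⟩

/-- `|B_∘(2^k)| = 3^{k+1} + 2`. -/
theorem ball_card_pow_two (k : ℕ) : bvol (2 ^ k) = 3 ^ (k + 1) + 2 := by
  have hsub : gasketV k ∪ reflect '' gasketV k ⊆ Set.range (Subtype.val : Vtx → ℝ × ℝ) := by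
    rw [Subtype.range_val]
    rintro p (h|⟨q, hq, rfl⟩)
    · exact Or.inl (gasketV_SGplus h)
    · exact Or.inr ⟨q, gasketV_SGplus hq, rfl⟩
  have hW : bvol (2^k)
      = (gasketV k ∪ reflect '' gasketV k).ncard := by
    rw [bvol, ball_eq k,
      Set.ncard_preimage_of_injective_subset_range Subtype.val_injective hsub]
  rw [hW]
  have hfin : (gasketV k).Finite := gasketV_finite k
  have h := Set.ncard_union_add_ncard_inter (gasketV k) (reflect '' gasketV k)
    hfin (hfin.image _)
  rw [inter_reflect k, Set.ncard_singleton] at h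
  have hrefl : (reflect '' gasketV k).ncard = (gasketV k).ncard :=
    Set.ncard_image_of_injective _ (fun a b hab => reflect_inj a b hab)
  have hc := gasketV_card k
  omega

end SGidla
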